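/- Let γ ∈ (0,1), μ > 0, T > 0, t ∈ [0,T], and r : [0,t] → ℝ continuous. Define v(τ) = (1/Γ(1−γ)) ∫₀^τ e^{−μ(τ−ξ)^γ} r(ξ)/(τ−ξ)^γ dξ for τ ∈ [0,t]. Then for all τ, τ' ∈ [0,t], |v(τ') − v(τ)| ≤ (‖r‖_{[0,t]} / Γ(2−γ)) |τ' − τ|^{1−γ} + (T^{1−γ}/Γ(2−γ)) κ(|τ' − τ|), where ‖r‖_{[0,t]} = max_{ξ∈[0,t]} |r(ξ)| and κ is the modulus of continuity of r on [0,t]. -/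

import Mathlib

open MeasureTheory Set

private lemma sub_rpow_le (a b p : ℝ) (ha : 0 ≤ a) (hab : a ≤ b) (hp0 : 0 ≤ p) (hp1 : p ≤ 1) :
    b ^ p - a ^ p ≤ (b - a) ^ p := by
  have key : ((b - a) + a) ^ p ≤ (b - a) ^ p + a ^ p := by
    have h := NNReal.rpow_add_le_add_rpow (b - a).toNNReal a.toNNReal hp0 hp1
    have h2 := NNReal.coe_le_coe.2 h
    push_cast at h2
    rwa [Real.coe_toNNReal _ (by linarith : (0:ℝ) ≤ b - a), Real.coe_toNNReal _ ha] at h2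
  rw [sub_add_cancel] at key
  linarith

private noncomputable def gker (γ μ : ℝ) (r : ℝ → ℝ) (c s : ℝ) : ℝ :=
  Real.exp (-(μ * s ^ γ)) * r (c - s) / s ^ γ

private lemma aux_int (γ μ t c M : ℝ) (hγ0 : 0 < γ) (hγ1 : γ < 1) (hμ : 0 < μ)
    (r : ℝ → ℝ) (hr : ContinuousOn r (Icc 0 t)) (hc0 : 0 ≤ c) (hct : c ≤ t)
    (hM : ∀ ξ ∈ Icc (0:ℝ) t, |r ξ| ≤ M) :
    IntervalIntegrable (gker γ μ r c) volume 0 c := by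
  rw [intervalIntegrable_iff_integrableOn_Ioc_of_le hc0]
  have hpow : ContinuousOn (fun s : ℝ => s ^ γ) (Ioc 0 c) :=
    fun x hx => (Real.continuousAt_rpow_const x γ (Or.inl hx.1.ne')).continuousWithinAt
  have hrc : ContinuousOn (fun s => r (c - s)) (Ioc 0 c) := by
    apply hr.comp (continuous_const.sub continuous_id).continuousOn
    intro s hs
    show c - s ∈ Icc 0 t
    exact ⟨by linarith [hs.2], by linarith [hs.1]⟩
  have hcont : ContinuousOn (gker γ μ r c) (Ioc 0 c) := by
    apply ContinuousOn.div
    · exact (Real.continuous_exp.comp_continuousOn (continuousOn_const.mul hpow).neg).mul hrc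
    · exact hpow
    · exact fun x hx => (Real.rpow_pos_of_pos hx.1 γ).ne'
  have hmeas := hcont.aestronglyMeasurable (μ := volume) measurableSet_Ioc
  have hint : IntegrableOn (fun s : ℝ => M * s ^ (-γ)) (Ioc 0 c) := by
    have h := (intervalIntegral.intervalIntegrable_rpow' (r := -γ)
      (by linarith)).const_mul M (a := 0) (b := c)
    rwa [intervalIntegrable_iff_integrableOn_Ioc_of_le hc0] at h
  apply hint.mono' hmeas
  filter_upwards [ae_restrict_mem measurableSet_Ioc] with s hs
  have hs0 : 0 < s := hs.1
  have hsγ : 0 < s ^ γ := Real.rpow_pos_of_pos hs0 γ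
  have hexp : Real.exp (-(μ * s ^ γ)) ≤ 1 := by
    apply Real.exp_le_one_iff.2
    nlinarith [hsγ]
  have hrb : |r (c - s)| ≤ M := hM _ ⟨by linarith [hs.2], by linarith [hs.1]⟩
  have hM0 : 0 ≤ M := le_trans (abs_nonneg _) hrb
  have : ‖gker γ μ r c s‖ = Real.exp (-(μ * s ^ γ)) * |r (c - s)| * (s ^ γ)⁻¹ := by
    rw [Real.norm_eq_abs, gker, abs_div, abs_mul, Real.abs_exp, abs_of_pos hsγ, div_eq_mul_inv]
  rw [this, Real.rpow_neg hs0.le]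
  have h1 : Real.exp (-(μ * s ^ γ)) * |r (c - s)| ≤ 1 * M :=
    mul_le_mul hexp hrb (abs_nonneg _) zero_le_one
  rw [one_mul] at h1
  exact mul_le_mul_of_nonneg_right h1 (inv_nonneg.2 hsγ.le)

private lemma key_lemma (γ μ T t : ℝ) (hγ0 : 0 < γ) (hγ1 : γ < 1) (hμ : 0 < μ)
    (hT : 0 < T) (ht : t ∈ Icc 0 T)
    (r : ℝ → ℝ) (hr : ContinuousOn r (Icc 0 t))
    (R : ℝ) (hR : IsGreatest {y | ∃ ξ ∈ Icc (0:ℝ) t, y = |r ξ|} R)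
    (κ : ℝ → ℝ)
    (hκ : ∀ δ ≥ (0:ℝ), IsGreatest
      {y | ∃ ξ ∈ Icc (0:ℝ) t, ∃ ξ' ∈ Icc (0:ℝ) t, |ξ - ξ'| ≤ δ ∧ y = |r ξ - r ξ'|} (κ δ))
    (v : ℝ → ℝ)
    (hv : ∀ τ, v τ = (Real.Gamma (1 - γ))⁻¹ *
      ∫ ξ in (0:ℝ)..τ, Real.exp (-(μ * (τ - ξ) ^ γ)) * r ξ / (τ - ξ) ^ γ)
    (a b : ℝ) (ha : a ∈ Icc 0 t) (hb : b ∈ Icc 0 t) (hab : a ≤ b) :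
    |v b - v a| ≤ R / Real.Gamma (2 - γ) * (b - a) ^ (1 - γ) +
      T ^ (1 - γ) / Real.Gamma (2 - γ) * κ (b - a) := by
  have h1γ : 0 < 1 - γ := by linarith
  have hΓpos : 0 < Real.Gamma (1 - γ) := Real.Gamma_pos_of_pos h1γ
  have hΓ2 : Real.Gamma (2 - γ) = (1 - γ) * Real.Gamma (1 - γ) := by
    rw [show (2:ℝ) - γ = (1 - γ) + 1 by ring, Real.Gamma_add_one h1γ.ne']
  have hRb : ∀ ξ ∈ Icc (0:ℝ) t, |r ξ| ≤ R := fun ξ hξ => hR.2 ⟨ξ, hξ, rfl⟩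
  have ht0 : 0 ≤ t := le_trans ha.1 ha.2
  have hR0 : 0 ≤ R := le_trans (abs_nonneg _) (hRb 0 ⟨le_rfl, ht0⟩)
  have hba0 : 0 ≤ b - a := by linarith
  have hκnn : 0 ≤ κ (b - a) :=
    le_trans (abs_nonneg _) ((hκ (b - a) hba0).2 ⟨0, ⟨le_rfl, ht0⟩, 0, ⟨le_rfl, ht0⟩,
      by simpa using hba0, rfl⟩)
  -- change of variables
  have hchg : ∀ c, 0 ≤ c → v c = (Real.Gamma (1 - γ))⁻¹ * ∫ s in (0:ℝ)..c, gker γ μ r c s := by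
    intro c hc
    rw [hv c]
    congr 1
    have h := intervalIntegral.integral_comp_sub_left (a := 0) (b := c) (gker γ μ r c) c
    simp only [sub_zero, sub_self] at h
    rw [← h]
    apply intervalIntegral.integral_congr
    intro ξ _
    simp [gker, sub_sub_cancel]
  -- integrability
  have hib : IntervalIntegrable (gker γ μ r b) volume 0 b :=
    aux_int γ μ t b R hγ0 hγ1 hμ r hr (le_trans ha.1 hab) hb.2 hRb
  have hia : IntervalIntegrable (gker γ μ r a) volume 0 a :=
    aux_int γ μ t a R hγ0 hγ1 hμ r hr ha.1 ha.2 hRb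
  have hib1 : IntervalIntegrable (gker γ μ r b) volume 0 a := by
    apply hib.mono_set
    rw [uIcc_of_le ha.1, uIcc_of_le (le_trans ha.1 hab)]
    exact Icc_subset_Icc le_rfl hab
  have hib2 : IntervalIntegrable (gker γ μ r b) volume a b := by
    apply hib.mono_set
    rw [uIcc_of_le hab, uIcc_of_le (le_trans ha.1 hab)]
    exact Icc_subset_Icc ha.1 le_rfl
  have hsplit : (∫ s in (0:ℝ)..b, gker γ μ r b s) =
      (∫ s in (0:ℝ)..a, gker γ μ r b s) + ∫ s in a..b, gker γ μ r b s :=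
    (intervalIntegral.integral_add_adjacent_intervals hib1 hib2).symm
  have hdiff : v b - v a = (Real.Gamma (1 - γ))⁻¹ *
      ((∫ s in (0:ℝ)..a, (gker γ μ r b s - gker γ μ r a s)) + ∫ s in a..b, gker γ μ r b s) := by
    rw [hchg a ha.1, hchg b (le_trans ha.1 hab), hsplit,
      intervalIntegral.integral_sub hib1 hia]
    ring
  -- pointwise bound 1
  have hmono1 : ∀ s ∈ Set.uIoc (0:ℝ) a, ‖gker γ μ r b s - gker γ μ r a s‖ ≤ κ (b - a) * s ^ (-γ) := by
    intro s hs
    rw [uIoc_of_le ha.1] at hs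
    have hs0 : 0 < s := hs.1
    have hsγ : 0 < s ^ γ := Real.rpow_pos_of_pos hs0 γ
    have hΔ : |r (b - s) - r (a - s)| ≤ κ (b - a) := by
      apply (hκ (b - a) hba0).2
      refine ⟨b - s, ⟨by linarith [hs.2, hs.1], by linarith [hs.1, hb.2]⟩,
        a - s, ⟨by linarith [hs.2], by linarith [hs.1, ha.2]⟩, ?_, rfl⟩
      rw [show b - s - (a - s) = b - a by ring, abs_of_nonneg hba0]
    have heq : gker γ μ r b s - gker γ μ r a s =
        Real.exp (-(μ * s ^ γ)) * (r (b - s) - r (a - s)) / s ^ γ := by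
      simp only [gker]
      field_simp
    rw [Real.norm_eq_abs, heq, abs_div, abs_mul, Real.abs_exp, abs_of_pos hsγ,
      div_eq_mul_inv, Real.rpow_neg hs0.le]
    have hexp : Real.exp (-(μ * s ^ γ)) ≤ 1 := Real.exp_le_one_iff.2 (by nlinarith [hsγ])
    have h1 : Real.exp (-(μ * s ^ γ)) * |r (b - s) - r (a - s)| ≤ 1 * κ (b - a) :=
      mul_le_mul hexp hΔ (abs_nonneg _) zero_le_one
    rw [one_mul] at h1
    exact mul_le_mul_of_nonneg_right h1 (inv_nonneg.2 hsγ.le)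
  -- pointwise bound 2
  have hmono2 : ∀ s ∈ Set.uIoc a b, ‖gker γ μ r b s‖ ≤ R * s ^ (-γ) := by
    intro s hs
    rw [uIoc_of_le hab] at hs
    have hs0 : 0 < s := lt_of_le_of_lt ha.1 hs.1
    have hsγ : 0 < s ^ γ := Real.rpow_pos_of_pos hs0 γ
    have hrb : |r (b - s)| ≤ R := hRb _ ⟨by linarith [hs.2], by linarith [hs0, hb.2]⟩
    rw [Real.norm_eq_abs, gker, abs_div, abs_mul, Real.abs_exp, abs_of_pos hsγ,
      div_eq_mul_inv, Real.rpow_neg hs0.le]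
    have hexp : Real.exp (-(μ * s ^ γ)) ≤ 1 := Real.exp_le_one_iff.2 (by nlinarith [hsγ])
    have h1 : Real.exp (-(μ * s ^ γ)) * |r (b - s)| ≤ 1 * R :=
      mul_le_mul hexp hrb (abs_nonneg _) zero_le_one
    rw [one_mul] at h1
    exact mul_le_mul_of_nonneg_right h1 (inv_nonneg.2 hsγ.le)
  have hrint : ∀ c d : ℝ, IntervalIntegrable (fun s : ℝ => s ^ (-γ)) volume c d :=
    fun c d => intervalIntegral.intervalIntegrable_rpow' (by linarith)
  -- integral bound 1
  have hbd1 : |∫ s in (0:ℝ)..a, (gker γ μ r b s - gker γ μ r a s)| ≤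
      κ (b - a) * T ^ (1 - γ) / (1 - γ) := by
    have h := intervalIntegral.norm_integral_le_abs_of_norm_le (μ := volume)
      (f := fun s => gker γ μ r b s - gker γ μ r a s) (g := fun s => κ (b - a) * s ^ (-γ))
      (a := 0) (b := a) ?_ ((hrint 0 a).const_mul _)
    · have hcomp : (∫ s in (0:ℝ)..a, κ (b - a) * s ^ (-γ)) =
          κ (b - a) * (a ^ (1 - γ) / (1 - γ)) := by
        rw [intervalIntegral.integral_const_mul, integral_rpow (Or.inl (by linarith))]
        rw [show -γ + 1 = 1 - γ by ring, Real.zero_rpow h1γ.ne', sub_zero]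
      rw [Real.norm_eq_abs] at h
      have haT : a ^ (1 - γ) ≤ T ^ (1 - γ) :=
        Real.rpow_le_rpow ha.1 (le_trans ha.2 ht.2) h1γ.le
      have hnn : 0 ≤ κ (b - a) * (a ^ (1 - γ) / (1 - γ)) :=
        mul_nonneg hκnn (div_nonneg (Real.rpow_nonneg ha.1 _) h1γ.le)
      calc |∫ s in (0:ℝ)..a, (gker γ μ r b s - gker γ μ r a s)|
          ≤ |∫ s in (0:ℝ)..a, κ (b - a) * s ^ (-γ)| := h
        _ = κ (b - a) * (a ^ (1 - γ) / (1 - γ)) := by rw [hcomp, abs_of_nonneg hnn]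
        _ ≤ κ (b - a) * (T ^ (1 - γ) / (1 - γ)) := by gcongr
        _ = κ (b - a) * T ^ (1 - γ) / (1 - γ) := by ring
    · filter_upwards [ae_restrict_mem measurableSet_uIoc] with s hs
      exact hmono1 s hs
  -- integral bound 2
  have hbd2 : |∫ s in a..b, gker γ μ r b s| ≤ R * (b - a) ^ (1 - γ) / (1 - γ) := by
    have h := intervalIntegral.norm_integral_le_abs_of_norm_le (μ := volume)
      (f := gker γ μ r b) (g := fun s => R * s ^ (-γ))
      (a := a) (b := b) ?_ ((hrint a b).const_mul _)
    · have hcomp : (∫ s in a..b, R * s ^ (-γ)) =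
          R * ((b ^ (1 - γ) - a ^ (1 - γ)) / (1 - γ)) := by
        rw [intervalIntegral.integral_const_mul, integral_rpow (Or.inl (by linarith))]
        rw [show -γ + 1 = 1 - γ by ring]
      rw [Real.norm_eq_abs] at h
      have hmn : a ^ (1 - γ) ≤ b ^ (1 - γ) := Real.rpow_le_rpow ha.1 hab h1γ.le
      have hnn : 0 ≤ R * ((b ^ (1 - γ) - a ^ (1 - γ)) / (1 - γ)) :=
        mul_nonneg hR0 (div_nonneg (sub_nonneg.2 hmn) h1γ.le)
      have hsub : b ^ (1 - γ) - a ^ (1 - γ) ≤ (b - a) ^ (1 - γ) :=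
        sub_rpow_le a b (1 - γ) ha.1 hab h1γ.le (by linarith)
      calc |∫ s in a..b, gker γ μ r b s|
          ≤ |∫ s in a..b, R * s ^ (-γ)| := h
        _ = R * ((b ^ (1 - γ) - a ^ (1 - γ)) / (1 - γ)) := by rw [hcomp, abs_of_nonneg hnn]
        _ ≤ R * ((b - a) ^ (1 - γ) / (1 - γ)) := by gcongr
        _ = R * (b - a) ^ (1 - γ) / (1 - γ) := by ring
    · filter_upwards [ae_restrict_mem measurableSet_uIoc] with s hs
      exact hmono2 s hs
  -- assembly
  have hfin : (Real.Gamma (1 - γ))⁻¹ *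
      (κ (b - a) * T ^ (1 - γ) / (1 - γ) + R * (b - a) ^ (1 - γ) / (1 - γ)) =
      R / Real.Gamma (2 - γ) * (b - a) ^ (1 - γ) +
        T ^ (1 - γ) / Real.Gamma (2 - γ) * κ (b - a) := by
    rw [hΓ2]
    field_simp
    ring
  calc |v b - v a|
      = (Real.Gamma (1 - γ))⁻¹ *
        |(∫ s in (0:ℝ)..a, (gker γ μ r b s - gker γ μ r a s)) + ∫ s in a..b, gker γ μ r b s| := by
        rw [hdiff, abs_mul, abs_of_nonneg (inv_nonneg.2 hΓpos.le)]
    _ ≤ (Real.Gamma (1 - γ))⁻¹ *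
        (κ (b - a) * T ^ (1 - γ) / (1 - γ) + R * (b - a) ^ (1 - γ) / (1 - γ)) := by
        apply mul_le_mul_of_nonneg_left _ (inv_nonneg.2 hΓpos.le)
        exact le_trans (abs_add_le _ _) (add_le_add hbd1 hbd2)
    _ = _ := hfin

theorem stmt10 (γ μ T t : ℝ) (hγ0 : 0 < γ) (hγ1 : γ < 1) (hμ : 0 < μ)
    (hT : 0 < T) (ht : t ∈ Icc 0 T)
    (r : ℝ → ℝ) (hr : ContinuousOn r (Icc 0 t))
    (R : ℝ) (hR : IsGreatest {y | ∃ ξ ∈ Icc (0:ℝ) t, y = |r ξ|} R)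
    (κ : ℝ → ℝ)
    (hκ : ∀ δ ≥ (0:ℝ), IsGreatest
      {y | ∃ ξ ∈ Icc (0:ℝ) t, ∃ ξ' ∈ Icc (0:ℝ) t, |ξ - ξ'| ≤ δ ∧ y = |r ξ - r ξ'|} (κ δ))
    (v : ℝ → ℝ)
    (hv : ∀ τ, v τ = (Real.Gamma (1 - γ))⁻¹ *
      ∫ ξ in (0:ℝ)..τ, Real.exp (-(μ * (τ - ξ) ^ γ)) * r ξ / (τ - ξ) ^ γ)
    (τ τ' : ℝ) (hτ : τ ∈ Icc 0 t) (hτ' : τ' ∈ Icc 0 t) :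
    |v τ' - v τ| ≤ R / Real.Gamma (2 - γ) * |τ' - τ| ^ (1 - γ) +
      T ^ (1 - γ) / Real.Gamma (2 - γ) * κ |τ' - τ| := by
  rcases le_total τ τ' with h | h
  · rw [show |τ' - τ| = τ' - τ from abs_of_nonneg (by linarith)]
    exact key_lemma γ μ T t hγ0 hγ1 hμ hT ht r hr R hR κ hκ v hv τ τ' hτ hτ' h
  · rw [show |τ' - τ| = τ - τ' by rw [abs_sub_comm]; exact abs_of_nonneg (by linarith),
      abs_sub_comm]
    exact key_lemma γ μ T t hγ0 hγ1 hμ hT ht r hr R hR κ hκ v hv τ' τ hτ' hτ h
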